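/- Let μ_m = Π_{j=1}^m g_{c_j j} be the increment of f on the cylinder Δ^{Q*_3}_{c_1...c_m}. Then f attains its maximum and minimum over the cylinder at its endpoints: if μ_m > 0 then max f = f(Δ_{c_1...c_m(2)}) and min f = f(Δ_{c_1...c_m(0)}); if μ_m < 0 then max f = f(Δ_{c_1...c_m(0)}) and min f = f(Δ_{c_1...c_m(2)}). -/

import Mathlib

open Finset

/-- g_{ik}: factors determined by the sequence (ε_k); indices 0-based. -/
noncomputable def gq (ε : ℕ → ℝ) (i : Fin 3) (k : ℕ) : ℝ :=
  if i = 1 then (1 - 2 * ε k) / 3 else (1 + ε k) / 3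

/-- δ_{ik}: δ_{0k}=0, δ_{1k}=g_{0k}, δ_{2k}=g_{0k}+g_{1k}. -/
noncomputable def dq (ε : ℕ → ℝ) (i : Fin 3) (k : ℕ) : ℝ :=
  if i = 0 then 0 else if i = 1 then gq ε 0 k else gq ε 0 k + gq ε 1 k

/-- F((α_k)) = δ_{α_1 1} + Σ_{k≥2} δ_{α_k k} Π_{j=1}^{k-1} g_{α_j j} (0-based indexing). -/
noncomputable def F (ε : ℕ → ℝ) (α : ℕ → Fin 3) : ℝ :=
  ∑' k : ℕ, dq ε (α k) k * ∏ j ∈ Finset.range k, gq ε (α j) j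
/-- β_{ik}: β_{0k}=0, β_{1k}=q_{0k}, β_{2k}=q_{0k}+q_{1k}. -/
noncomputable def bq (q : Fin 3 → ℕ → ℝ) (i : Fin 3) (k : ℕ) : ℝ :=
  if i = 0 then 0 else if i = 1 then q 0 k else q 0 k + q 1 k

/-- The number with Q*_3-digits (α_k): x = β_{α_1 1} + Σ_{k≥2} β_{α_k k} Π_{j=1}^{k-1} q_{α_j j}. -/
noncomputable def Xval (q : Fin 3 → ℕ → ℝ) (α : ℕ → Fin 3) : ℝ :=
  ∑' k : ℕ, bq q (α k) k * ∏ j ∈ Finset.range k, q (α j) j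

/-! ### Auxiliary definitions -/

noncomputable def Xterm (q : Fin 3 → ℕ → ℝ) (β : ℕ → Fin 3) (k : ℕ) : ℝ :=
  bq q (β k) k * ∏ j ∈ Finset.range k, q (β j) j

noncomputable def Fterm (ε : ℕ → ℝ) (a : ℕ → Fin 3) (k : ℕ) : ℝ :=
  dq ε (a k) k * ∏ j ∈ Finset.range k, gq ε (a j) j

lemma Xval_eq (q : Fin 3 → ℕ → ℝ) (β : ℕ → Fin 3) : Xval q β = ∑' k, Xterm q β k := rfl

lemma F_eq (ε : ℕ → ℝ) (a : ℕ → Fin 3) : F ε a = ∑' k, Fterm ε a k := rfl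

/-- goodness of q -/
def Qok (q : Fin 3 → ℕ → ℝ) : Prop := (∀ i k, 0 < q i k) ∧ (∀ k, q 0 k + q 1 k + q 2 k = 1)

/-- goodness of ε -/
def Eok (ε : ℕ → ℝ) : Prop := ∀ k, 0 ≤ ε k ∧ ε k ≤ 1

lemma Qok.shift {q : Fin 3 → ℕ → ℝ} (h : Qok q) (m : ℕ) : Qok (fun i k => q i (k + m)) :=
  ⟨fun i k => h.1 i (k + m), fun k => h.2 (k + m)⟩

lemma Eok.shift {ε : ℕ → ℝ} (h : Eok ε) (m : ℕ) : Eok (fun k => ε (k + m)) :=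
  fun k => h (k + m)

lemma bq_nonneg {q : Fin 3 → ℕ → ℝ} (h : Qok q) (i : Fin 3) (k : ℕ) : 0 ≤ bq q i k := by
  have h0 := (h.1 0 k).le; have h1 := (h.1 1 k).le
  fin_cases i <;> simp [bq] <;> linarith

lemma bq_add_le {q : Fin 3 → ℕ → ℝ} (h : Qok q) (i : Fin 3) (k : ℕ) :
    bq q i k + q i k ≤ 1 := by
  have h0 := h.1 0 k; have h1 := h.1 1 k; have h2 := h.1 2 k; have hs := h.2 k
  fin_cases i <;> simp [bq] <;> linarith

lemma qprod_pos {q : Fin 3 → ℕ → ℝ} (h : Qok q) (β : ℕ → Fin 3) (n : ℕ) :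
    0 < ∏ j ∈ Finset.range n, q (β j) j :=
  Finset.prod_pos (fun j _ => h.1 (β j) j)

lemma Xterm_nonneg {q : Fin 3 → ℕ → ℝ} (h : Qok q) (β : ℕ → Fin 3) (k : ℕ) :
    0 ≤ Xterm q β k :=
  mul_nonneg (bq_nonneg h _ _) (qprod_pos h β k).le

lemma Xsum_bound {q : Fin 3 → ℕ → ℝ} (h : Qok q) (β : ℕ → Fin 3) (n : ℕ) :
    (∑ k ∈ Finset.range n, Xterm q β k) + ∏ j ∈ Finset.range n, q (β j) j ≤ 1 := by
  induction n with
  | zero => simp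
  | succ n ih =>
      rw [Finset.sum_range_succ, Finset.prod_range_succ]
      have hP := (qprod_pos h β n)
      have hb := bq_add_le h (β n) n
      have : Xterm q β n + (∏ j ∈ Finset.range n, q (β j) j) * q (β n) n
          ≤ ∏ j ∈ Finset.range n, q (β j) j := by
        unfold Xterm
        nlinarith
      linarith

lemma Xsummable {q : Fin 3 → ℕ → ℝ} (h : Qok q) (β : ℕ → Fin 3) : Summable (Xterm q β) :=
  summable_of_sum_range_le (c := 1) (Xterm_nonneg h β) (fun n => by
    have h1 := Xsum_bound h β n
    have h2 := qprod_pos h β n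
    linarith)

lemma Xval_nonneg {q : Fin 3 → ℕ → ℝ} (h : Qok q) (β : ℕ → Fin 3) : 0 ≤ Xval q β :=
  tsum_nonneg (Xterm_nonneg h β)

lemma Xval_le_one {q : Fin 3 → ℕ → ℝ} (h : Qok q) (β : ℕ → Fin 3) : Xval q β ≤ 1 :=
  Summable.tsum_le_of_sum_range_le (Xsummable h β) (fun n => by
    have h1 := Xsum_bound h β n
    have h2 := qprod_pos h β n
    unfold Xterm at h1
    linarith)

lemma Xval_decomp {q : Fin 3 → ℕ → ℝ} (h : Qok q) (β : ℕ → Fin 3) (m : ℕ) :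
    Xval q β = (∑ k ∈ Finset.range m, Xterm q β k) +
      (∏ j ∈ Finset.range m, q (β j) j) *
        Xval (fun i k => q i (k + m)) (fun k => β (k + m)) := by
  rw [Xval_eq, ← Summable.sum_add_tsum_nat_add m (Xsummable h β)]
  congr 1
  rw [Xval_eq, ← tsum_mul_left]
  apply tsum_congr
  intro k
  have hterm : Xterm (fun i k => q i (k + m)) (fun k => β (k + m)) k
      = bq q (β (k + m)) (k + m) * ∏ j ∈ Finset.range k, q (β (j + m)) (j + m) := rfl
  rw [hterm]
  unfold Xterm
  have : k + m = m + k := Nat.add_comm k m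
  rw [this, Finset.prod_range_add]
  have : ∏ x ∈ Finset.range k, q (β (m + x)) (m + x)
      = ∏ x ∈ Finset.range k, q (β (x + m)) (x + m) :=
    Finset.prod_congr rfl (fun x _ => by rw [Nat.add_comm m x])
  rw [this]
  ring

lemma Xval_zero (q : Fin 3 → ℕ → ℝ) : Xval q (fun _ => 0) = 0 := by
  rw [Xval_eq]
  convert tsum_zero with k
  unfold Xterm bq
  simp


lemma fin3_cases (i : Fin 3) : i = 0 ∨ i = 1 ∨ i = 2 := by fin_cases i <;> simp

lemma Xval_const_eq_zero {q : Fin 3 → ℕ → ℝ} {β : ℕ → Fin 3} (h : ∀ k, β k = 0) :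
    Xval q β = 0 := by
  have : β = fun _ => 0 := funext h
  rw [this, Xval_zero]

lemma Xval_lt_one {q : Fin 3 → ℕ → ℝ} (h : Qok q) (β : ℕ → Fin 3) (j : ℕ) (hj : β j ≠ 2) :
    Xval q β ≤ 1 - (∏ i ∈ Finset.range j, q (β i) i) * q 2 j := by
  have hd := Xval_decomp h β j
  set q1 : Fin 3 → ℕ → ℝ := fun i k => q i (k + j) with hq1
  have hq1ok : Qok q1 := h.shift j
  have hd1 := Xval_decomp hq1ok (fun k => β (k + j)) 1
  have htail : Xval (fun i k => q1 i (k + 1)) (fun k => β (k + 1 + j)) ≤ 1 :=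
    Xval_le_one (hq1ok.shift 1) _
  have htail0 : 0 ≤ Xval (fun i k => q1 i (k + 1)) (fun k => β (k + 1 + j)) :=
    Xval_nonneg (hq1ok.shift 1) _
  have hP1 : 0 < ∏ i ∈ Finset.range 1, q1 (β (i + j)) i := qprod_pos hq1ok _ 1
  -- bound the one-step value
  have hu : Xval q1 (fun k => β (k + j)) ≤ 1 - q 2 j := by
    have hterm : ∑ k ∈ Finset.range 1, Xterm q1 (fun k => β (k + j)) k
        = bq q (β j) j := by
      simp [Xterm, bq, hq1]
    have hprod : ∏ i ∈ Finset.range 1, q1 (β (i + j)) i = q (β j) j := by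
      simp [hq1]
    have h0 := h.1 0 j; have h1 := h.1 1 j; have h2 := h.1 2 j; have hs := h.2 j
    have hb : bq q (β j) j + q (β j) j ≤ 1 - q 2 j := by
      rcases fin3_cases (β j) with hc | hc | hc <;> rw [hc] <;> simp [bq] <;> first
        | linarith
        | (exact absurd hc hj)
    rw [hd1, hterm, hprod]
    nlinarith [mul_le_mul_of_nonneg_left htail (h.1 (β j) j).le, h.1 (β j) j, htail0]
  have hP : 0 < ∏ i ∈ Finset.range j, q (β i) i := qprod_pos h β j
  have hS := Xsum_bound h β j
  rw [hd]
  nlinarith [mul_le_mul_of_nonneg_left hu hP.le]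

lemma Xval_eq_one_digits {q : Fin 3 → ℕ → ℝ} (h : Qok q) {β : ℕ → Fin 3}
    (h1 : Xval q β = 1) (j : ℕ) : β j = 2 := by
  by_contra hj
  have := Xval_lt_one h β j hj
  have hP : 0 < ∏ i ∈ Finset.range j, q (β i) i := qprod_pos h β j
  nlinarith [h.1 2 j]

lemma Xval_pos {q : Fin 3 → ℕ → ℝ} (h : Qok q) (β : ℕ → Fin 3) (j : ℕ) (hj : β j ≠ 0) :
    0 < Xval q β := by
  have hterm : 0 < Xterm q β j := by
    apply mul_pos _ (qprod_pos h β j)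
    have h0 := h.1 0 j; have h1 := h.1 1 j
    rcases fin3_cases (β j) with hc | hc | hc <;> rw [hc] <;> simp [bq] <;> first
      | linarith
      | (exact absurd hc hj)
  calc 0 < Xterm q β j := hterm
    _ ≤ Xval q β := Summable.le_tsum (Xsummable h β) j (fun i _ => Xterm_nonneg h β i)

lemma Xval_eq_zero_digits {q : Fin 3 → ℕ → ℝ} (h : Qok q) {β : ℕ → Fin 3}
    (h0 : Xval q β = 0) (j : ℕ) : β j = 0 := by
  by_contra hj
  have := Xval_pos h β j hj
  linarith

lemma Xval_two_partial {q : Fin 3 → ℕ → ℝ} (h : Qok q) (n : ℕ) :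
    (∑ k ∈ Finset.range n, Xterm q (fun _ => 2) k) = 1 - ∏ j ∈ Finset.range n, q 2 j := by
  induction n with
  | zero => simp
  | succ n ih =>
      rw [Finset.sum_range_succ, Finset.prod_range_succ, ih]
      have hs := h.2 n
      have : Xterm q (fun _ => 2) n = (1 - q 2 n) * ∏ j ∈ Finset.range n, q 2 j := by
        unfold Xterm
        rw [show bq q 2 n = 1 - q 2 n from by
          unfold bq; rw [if_neg (by decide), if_neg (by decide)]; linarith]
      rw [this]
      ring

lemma Xval_mono {q : Fin 3 → ℕ → ℝ} (h : Qok q) (β γ : ℕ → Fin 3) (k : ℕ)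
    (hag : ∀ j, j < k → β j = γ j) (hlt : (β k).val < (γ k).val) :
    Xval q β ≤ Xval q γ ∧
      (Xval q β = Xval q γ →
        (γ k).val = (β k).val + 1 ∧ ∀ j, k < j → β j = 2 ∧ γ j = 0) := by
  have hdβ := Xval_decomp h β k
  have hdγ := Xval_decomp h γ k
  have hS : (∑ i ∈ Finset.range k, Xterm q β i) = ∑ i ∈ Finset.range k, Xterm q γ i := by
    refine Finset.sum_congr rfl (fun i hi => ?_)
    unfold Xterm
    rw [hag i (Finset.mem_range.mp hi)]
    congr 1
    exact Finset.prod_congr rfl (fun j hj => by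
      rw [hag j (lt_trans (Finset.mem_range.mp hj) (Finset.mem_range.mp hi))])
  have hP : (∏ j ∈ Finset.range k, q (β j) j) = ∏ j ∈ Finset.range k, q (γ j) j :=
    Finset.prod_congr rfl (fun j hj => by rw [hag j (Finset.mem_range.mp hj)])
  set q1 : Fin 3 → ℕ → ℝ := fun i t => q i (t + k) with hq1
  have hq1ok : Qok q1 := h.shift k
  have hq2ok : Qok (fun i t => q1 i (t + 1)) := hq1ok.shift 1
  have hdu := Xval_decomp hq1ok (fun t => β (t + k)) 1
  have hdv := Xval_decomp hq1ok (fun t => γ (t + k)) 1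
  set u' := Xval (fun i t => q1 i (t + 1)) (fun t => β (t + 1 + k)) with hu'
  set v' := Xval (fun i t => q1 i (t + 1)) (fun t => γ (t + 1 + k)) with hv'
  have hu'le : u' ≤ 1 := Xval_le_one hq2ok _
  have hu'0 : 0 ≤ u' := Xval_nonneg hq2ok _
  have hv'le : v' ≤ 1 := Xval_le_one hq2ok _
  have hv'0 : 0 ≤ v' := Xval_nonneg hq2ok _
  clear_value u' v'
  have htermβ : (∑ t ∈ Finset.range 1, Xterm q1 (fun t => β (t + k)) t) = bq q (β k) k := by
    simp [Xterm, bq, hq1]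
  have htermγ : (∑ t ∈ Finset.range 1, Xterm q1 (fun t => γ (t + k)) t) = bq q (γ k) k := by
    simp [Xterm, bq, hq1]
  have hprodβ : (∏ t ∈ Finset.range 1, q1 (β (t + k)) t) = q (β k) k := by simp [hq1]
  have hprodγ : (∏ t ∈ Finset.range 1, q1 (γ (t + k)) t) = q (γ k) k := by simp [hq1]
  rw [htermβ, hprodβ] at hdu
  rw [htermγ, hprodγ] at hdv
  clear_value q1
  have h0 := h.1 0 k; have h1 := h.1 1 k; have h2 := h.1 2 k; have hs := h.2 k
  have hqβ := h.1 (β k) k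
  have hqγ := h.1 (γ k) k
  have b0 : bq q 0 k = 0 := by simp [bq]
  have b1 : bq q 1 k = q 0 k := by simp [bq]
  have b2 : bq q 2 k = q 0 k + q 1 k := by simp [bq]
  have key : bq q (β k) k + q (β k) k ≤ bq q (γ k) k ∧
      (bq q (β k) k + q (β k) k = bq q (γ k) k → (γ k).val = (β k).val + 1) := by
    rcases fin3_cases (β k) with hb' | hb' | hb' <;>
      rcases fin3_cases (γ k) with hg' | hg' | hg' <;>
        rw [hb', hg'] at hlt ⊢ <;>
        simp only [b0, b1, b2] <;>
        first
          | exact absurd hlt (by decide)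
          | exact ⟨by linarith, fun he => by decide⟩
          | exact ⟨by linarith, fun he => by exfalso; linarith⟩
  have hPpos : 0 < ∏ j ∈ Finset.range k, q (β j) j := qprod_pos h β k
  have hPpos' : 0 < ∏ j ∈ Finset.range k, q (γ j) j := qprod_pos h γ k
  have hchain : Xval q1 (fun t => β (t + k)) ≤ Xval q1 (fun t => γ (t + k)) := by
    rw [hdu, hdv]
    nlinarith [key.1, mul_le_mul_of_nonneg_left hu'le hqβ.le, mul_nonneg hqγ.le hv'0]
  constructor
  · rw [hdβ, hdγ, hS, hP]
    exact add_le_add_right (mul_le_mul_of_nonneg_left hchain hPpos'.le) _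
  · intro heq
    have huv : Xval q1 (fun t => β (t + k)) = Xval q1 (fun t => γ (t + k)) := by
      rw [hdβ, hdγ, hS, hP] at heq
      have h' : (∏ j ∈ Finset.range k, q (γ j) j) * Xval q1 (fun t => β (t + k))
          = (∏ j ∈ Finset.range k, q (γ j) j) * Xval q1 (fun t => γ (t + k)) := by linarith
      exact mul_left_cancel₀ (ne_of_gt hPpos') h'
    rw [hdu, hdv] at huv
    have c1 : q (β k) k * u' ≤ q (β k) k * 1 := mul_le_mul_of_nonneg_left hu'le hqβ.le
    have c2 : 0 ≤ q (γ k) k * v' := mul_nonneg hqγ.le hv'0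
    have c3 : q (γ k) k * v' ≤ q (γ k) k * 1 := mul_le_mul_of_nonneg_left hv'le hqγ.le
    have hu1 : u' = 1 := by
      have A : q (β k) k * u' = q (β k) k * 1 := by
        rw [mul_one]; linarith [key.1]
      exact mul_left_cancel₀ (ne_of_gt hqβ) A
    have hv0 : v' = 0 := by
      have B : q (γ k) k * v' = q (γ k) k * 0 := by
        rw [mul_zero]; linarith [key.1, c1]
      exact mul_left_cancel₀ (ne_of_gt hqγ) B
    have hmid : bq q (β k) k + q (β k) k = bq q (γ k) k := by
      rw [hu1] at huv; rw [hv0] at huv; linarith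
    refine ⟨key.2 hmid, fun j hj => ?_⟩
    have hβ2 : ∀ t, β (t + 1 + k) = 2 :=
      Xval_eq_one_digits hq2ok (hu'.symm.trans hu1)
    have hγ0 : ∀ t, γ (t + 1 + k) = 0 :=
      Xval_eq_zero_digits hq2ok (hv'.symm.trans hv0)
    constructor
    · have := hβ2 (j - k - 1)
      rwa [show j - k - 1 + 1 + k = j from by omega] at this
    · have := hγ0 (j - k - 1)
      rwa [show j - k - 1 + 1 + k = j from by omega] at this

/-! ### F side -/

lemma gq_abs {ε : ℕ → ℝ} (h : Eok ε) (i : Fin 3) (k : ℕ) : |gq ε i k| ≤ 2/3 := by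
  have h1 := (h k).1; have h2 := (h k).2
  fin_cases i <;> simp [gq, abs_le] <;> constructor <;> linarith

lemma gq_lb {ε : ℕ → ℝ} (h : Eok ε) (i : Fin 3) (k : ℕ) : -(1/3) ≤ gq ε i k := by
  have h1 := (h k).1; have h2 := (h k).2
  fin_cases i <;> simp [gq] <;> linarith

lemma dq_nonneg {ε : ℕ → ℝ} (h : Eok ε) (i : Fin 3) (k : ℕ) : 0 ≤ dq ε i k := by
  have h1 := (h k).1; have h2 := (h k).2
  fin_cases i <;> simp [dq, gq] <;> linarith

lemma dq_le_one {ε : ℕ → ℝ} (h : Eok ε) (i : Fin 3) (k : ℕ) : dq ε i k ≤ 1 := by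
  have h1 := (h k).1; have h2 := (h k).2
  fin_cases i <;> simp [dq, gq] <;> linarith

lemma dqg_nonneg {ε : ℕ → ℝ} (h : Eok ε) (i : Fin 3) (k : ℕ) : 0 ≤ dq ε i k + gq ε i k := by
  have h1 := (h k).1; have h2 := (h k).2
  fin_cases i <;> simp [dq, gq] <;> linarith

lemma dqg_le_one {ε : ℕ → ℝ} (h : Eok ε) (i : Fin 3) (k : ℕ) : dq ε i k + gq ε i k ≤ 1 := by
  have h1 := (h k).1; have h2 := (h k).2
  fin_cases i <;> simp [dq, gq] <;> linarith

lemma gprod_abs {ε : ℕ → ℝ} (h : Eok ε) (a : ℕ → Fin 3) (n : ℕ) :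
    |∏ j ∈ Finset.range n, gq ε (a j) j| ≤ (2/3) ^ n := by
  rw [Finset.abs_prod]
  calc (∏ j ∈ Finset.range n, |gq ε (a j) j|) ≤ ∏ j ∈ Finset.range n, (2/3 : ℝ) :=
        Finset.prod_le_prod (fun j _ => abs_nonneg _) (fun j _ => gq_abs h (a j) j)
    _ = (2/3) ^ n := by rw [Finset.prod_const, Finset.card_range]

lemma Fterm_abs {ε : ℕ → ℝ} (h : Eok ε) (a : ℕ → Fin 3) (k : ℕ) :
    ‖Fterm ε a k‖ ≤ (2/3) ^ k := by
  rw [Real.norm_eq_abs]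
  unfold Fterm
  rw [abs_mul]
  have h2 := gprod_abs h a k
  have hd : |dq ε (a k) k| ≤ 1 := by
    rw [abs_le]; constructor <;> linarith [dq_nonneg h (a k) k, dq_le_one h (a k) k]
  calc |dq ε (a k) k| * |∏ j ∈ Finset.range k, gq ε (a j) j|
      ≤ 1 * (2/3) ^ k := by
        apply mul_le_mul hd h2 (abs_nonneg _) (by norm_num)
    _ = (2/3) ^ k := one_mul _

lemma Fsummable {ε : ℕ → ℝ} (h : Eok ε) (a : ℕ → Fin 3) : Summable (Fterm ε a) :=
  Summable.of_norm_bounded (summable_geometric_of_lt_one (by norm_num) (by norm_num))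
    (Fterm_abs h a)

lemma F_decomp {ε : ℕ → ℝ} (h : Eok ε) (a : ℕ → Fin 3) (m : ℕ) :
    F ε a = (∑ k ∈ Finset.range m, Fterm ε a k) +
      (∏ j ∈ Finset.range m, gq ε (a j) j) *
        F (fun k => ε (k + m)) (fun k => a (k + m)) := by
  rw [F_eq, ← Summable.sum_add_tsum_nat_add m (Fsummable h a)]
  congr 1
  rw [F_eq, ← tsum_mul_left]
  apply tsum_congr
  intro k
  have hterm : Fterm (fun k => ε (k + m)) (fun k => a (k + m)) k
      = dq ε (a (k + m)) (k + m) * ∏ j ∈ Finset.range k, gq ε (a (j + m)) (j + m) := rfl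
  rw [hterm]
  unfold Fterm
  have : k + m = m + k := Nat.add_comm k m
  rw [this, Finset.prod_range_add]
  have : ∏ x ∈ Finset.range k, gq ε (a (m + x)) (m + x)
      = ∏ x ∈ Finset.range k, gq ε (a (x + m)) (x + m) :=
    Finset.prod_congr rfl (fun x _ => by rw [Nat.add_comm m x])
  rw [this]
  ring

lemma F_zero (ε : ℕ → ℝ) : F ε (fun _ => 0) = 0 := by
  rw [F_eq]
  convert tsum_zero with k
  unfold Fterm dq
  simp

lemma gq2_pos {ε : ℕ → ℝ} (h : Eok ε) (j : ℕ) : 0 < gq ε 2 j ∧ gq ε 2 j ≤ 2/3 := by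
  have h1 := (h j).1; have h2 := (h j).2
  simp [gq]
  constructor <;> linarith

lemma F_two {ε : ℕ → ℝ} (h : Eok ε) : F ε (fun _ => 2) = 1 := by
  have hs := (Fsummable h (fun _ => 2)).hasSum
  have h1 : Filter.Tendsto (fun n => ∑ k ∈ Finset.range n, Fterm ε (fun _ => 2) k)
      Filter.atTop (nhds (F ε (fun _ => 2))) := by
    rw [F_eq]; exact hs.tendsto_sum_nat
  have hpartial : ∀ n, (∑ k ∈ Finset.range n, Fterm ε (fun _ => 2) k)
      = 1 - ∏ j ∈ Finset.range n, gq ε 2 j := by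
    intro n
    induction n with
    | zero => simp
    | succ n ih =>
        rw [Finset.sum_range_succ, Finset.prod_range_succ, ih]
        have hd : dq ε 2 n = 1 - gq ε 2 n := by
          simp [dq, gq]; ring
        have : Fterm ε (fun _ => 2) n = (1 - gq ε 2 n) * ∏ j ∈ Finset.range n, gq ε 2 j := by
          unfold Fterm
          rw [hd]
        rw [this]
        ring
  have hp0 : Filter.Tendsto (fun n => ∏ j ∈ Finset.range n, gq ε 2 j)
      Filter.atTop (nhds 0) := by
    have hub : ∀ n, ∏ j ∈ Finset.range n, gq ε 2 j ≤ (2/3)^n := fun n =>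
      calc ∏ j ∈ Finset.range n, gq ε 2 j ≤ ∏ j ∈ Finset.range n, (2/3:ℝ) :=
            Finset.prod_le_prod (fun j _ => (gq2_pos h j).1.le) (fun j _ => (gq2_pos h j).2)
        _ = (2/3)^n := by rw [Finset.prod_const, Finset.card_range]
    have hlb : ∀ n, 0 ≤ ∏ j ∈ Finset.range n, gq ε 2 j := fun n =>
      Finset.prod_nonneg (fun j _ => (gq2_pos h j).1.le)
    exact squeeze_zero hlb hub (tendsto_pow_atTop_nhds_zero_of_lt_one (by norm_num) (by norm_num))
  have h2' : Filter.Tendsto (fun n => ∑ k ∈ Finset.range n, Fterm ε (fun _ => 2) k)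
      Filter.atTop (nhds 1) := by
    simp_rw [hpartial]
    have := Filter.Tendsto.const_sub (1:ℝ) hp0
    simpa using this
  exact tendsto_nhds_unique h1 h2'

lemma F_crude {ε : ℕ → ℝ} (h : Eok ε) (a : ℕ → Fin 3) : |F ε a| ≤ 3 := by
  have hg : Summable (fun k => (2/3:ℝ)^k) :=
    summable_geometric_of_lt_one (by norm_num) (by norm_num)
  have hnorm : Summable (fun k => ‖Fterm ε a k‖) :=
    Summable.of_nonneg_of_le (fun k => norm_nonneg _) (Fterm_abs h a) hg
  rw [F_eq, ← Real.norm_eq_abs]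
  calc ‖∑' k, Fterm ε a k‖ ≤ ∑' k, ‖Fterm ε a k‖ := norm_tsum_le_tsum_norm hnorm
    _ ≤ ∑' k, (2/3:ℝ)^k := Summable.tsum_le_tsum (Fterm_abs h a) hnorm hg
    _ = (1 - 2/3)⁻¹ := tsum_geometric_of_lt_one (by norm_num) (by norm_num)
    _ ≤ 3 := by norm_num

lemma F_aux : ∀ n : ℕ, ∀ ε : ℕ → ℝ, Eok ε → ∀ a : ℕ → Fin 3,
    -(3*(2/3)^n) ≤ F ε a ∧ F ε a ≤ 1 + 3*(2/3)^n := by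
  intro n
  induction n with
  | zero =>
      intro ε h a
      have hc := F_crude h a
      rw [abs_le] at hc
      constructor <;> simp <;> linarith [hc.1, hc.2]
  | succ n ih =>
      intro ε h a
      have hd := F_decomp h a 1
      simp only [Finset.sum_range_one, Finset.prod_range_one] at hd
      have hF0 : Fterm ε a 0 = dq ε (a 0) 0 := by
        unfold Fterm; simp
      rw [hF0] at hd
      obtain ⟨hl, hr⟩ := ih (fun k => ε (k + 1)) (h.shift 1) (fun k => a (k + 1))
      have ht0 : (0:ℝ) ≤ (2/3)^n := by positivity
      have habs := gq_abs h (a 0) 0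
      rw [abs_le] at habs
      have hd0 := dq_nonneg h (a 0) 0
      have hd1 := dq_le_one h (a 0) 0
      have hdg0 := dqg_nonneg h (a 0) 0
      have hdg1 := dqg_le_one h (a 0) 0
      have hgl := gq_lb h (a 0) 0
      rw [hd, pow_succ]
      set s := F (fun k => ε (k + 1)) (fun k => a (k + 1)) with hsdef
      set g := gq ε (a 0) 0 with hgdef
      rcases le_or_gt 0 g with hg | hg
      · constructor
        · nlinarith [mul_le_mul_of_nonneg_left hl hg, mul_le_mul_of_nonneg_right habs.2 ht0]
        · nlinarith [mul_le_mul_of_nonneg_left hr hg, mul_le_mul_of_nonneg_right habs.2 ht0]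
      · constructor
        · nlinarith [mul_le_mul_of_nonpos_left hr hg.le, mul_le_mul_of_nonneg_right hgl ht0]
        · nlinarith [mul_le_mul_of_nonpos_left hl hg.le, mul_le_mul_of_nonneg_right hgl ht0]

lemma F_nonneg {ε : ℕ → ℝ} (h : Eok ε) (a : ℕ → Fin 3) : 0 ≤ F ε a := by
  by_contra hc
  push_neg at hc
  obtain ⟨n, hn⟩ := exists_pow_lt_of_lt_one (x := -F ε a / 3) (by linarith)
    (show (2:ℝ)/3 < 1 by norm_num)
  have := (F_aux n ε h a).1
  linarith

lemma F_le_one {ε : ℕ → ℝ} (h : Eok ε) (a : ℕ → Fin 3) : F ε a ≤ 1 := by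
  by_contra hc
  push_neg at hc
  obtain ⟨n, hn⟩ := exists_pow_lt_of_lt_one (x := (F ε a - 1) / 3) (by linarith)
    (show (2:ℝ)/3 < 1 by norm_num)
  have := (F_aux n ε h a).2
  linarith

lemma F_congr_aux {q : Fin 3 → ℕ → ℝ} (hQ : Qok q) {ε : ℕ → ℝ} (hE : Eok ε)
    (β γ : ℕ → Fin 3) (k : ℕ) (hag : ∀ j, j < k → β j = γ j)
    (hlt : (β k).val < (γ k).val) (hx : Xval q β = Xval q γ) : F ε β = F ε γ := by
  obtain ⟨hsucc, htail⟩ := (Xval_mono hQ β γ k hag hlt).2 hx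
  have hdβ := F_decomp hE β (k + 1)
  have hdγ := F_decomp hE γ (k + 1)
  have hβt : (fun t => β (t + (k + 1))) = (fun _ => (2 : Fin 3)) :=
    funext fun t => (htail _ (by omega)).1
  have hγt : (fun t => γ (t + (k + 1))) = (fun _ => (0 : Fin 3)) :=
    funext fun t => (htail _ (by omega)).2
  rw [hβt, F_two (hE.shift (k + 1))] at hdβ
  rw [hγt, F_zero] at hdγ
  have hS : (∑ i ∈ Finset.range k, Fterm ε β i) = ∑ i ∈ Finset.range k, Fterm ε γ i := by
    refine Finset.sum_congr rfl (fun i hi => ?_)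
    unfold Fterm
    rw [hag i (Finset.mem_range.mp hi)]
    congr 1
    exact Finset.prod_congr rfl (fun j hj => by
      rw [hag j (lt_trans (Finset.mem_range.mp hj) (Finset.mem_range.mp hi))])
  have hPg : (∏ j ∈ Finset.range k, gq ε (β j) j) = ∏ j ∈ Finset.range k, gq ε (γ j) j :=
    Finset.prod_congr rfl (fun j hj => by rw [hag j (Finset.mem_range.mp hj)])
  have hdd : dq ε (β k) k + gq ε (β k) k = dq ε (γ k) k := by
    rcases fin3_cases (β k) with hb | hb | hb <;> rcases fin3_cases (γ k) with hg | hg | hg <;>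
      rw [hb, hg] at hsucc ⊢ <;>
        first
          | (exfalso; revert hsucc; decide)
          | (simp [dq]; try ring)
  rw [hdβ, hdγ, Finset.sum_range_succ, Finset.sum_range_succ, Finset.prod_range_succ,
    Finset.prod_range_succ]
  unfold Fterm at hS ⊢
  rw [hS, hPg]
  linear_combination (∏ j ∈ Finset.range k, gq ε (γ j) j) * hdd

lemma F_congr {q : Fin 3 → ℕ → ℝ} (hQ : Qok q) {ε : ℕ → ℝ} (hE : Eok ε)
    (β γ : ℕ → Fin 3) (hx : Xval q β = Xval q γ) : F ε β = F ε γ := by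
  by_cases hbg : β = γ
  · rw [hbg]
  · have hne : ∃ k, β k ≠ γ k := Function.ne_iff.mp hbg
    have hk : β (Nat.find hne) ≠ γ (Nat.find hne) := Nat.find_spec hne
    have hag : ∀ j, j < Nat.find hne → β j = γ j :=
      fun j hj => not_not.mp (Nat.find_min hne hj)
    rcases lt_trichotomy (β (Nat.find hne)).val (γ (Nat.find hne)).val with hlt | heq | hgt
    · exact F_congr_aux hQ hE β γ _ hag hlt hx
    · exact absurd (Fin.val_injective heq) hk
    · exact (F_congr_aux hQ hE γ β _ (fun j hj => (hag j hj).symm) hgt hx.symm).symm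

lemma F_const_eq_zero {ε : ℕ → ℝ} {a : ℕ → Fin 3} (h : ∀ k, a k = 0) : F ε a = 0 := by
  have : a = fun _ => 0 := funext h
  rw [this, F_zero]

theorem stmt14 (q : Fin 3 → ℕ → ℝ) (hq : ∀ i k, 0 < q i k)
    (hsum : ∀ k, q 0 k + q 1 k + q 2 k = 1)
    (ε : ℕ → ℝ) (hε : ∀ k, 0 ≤ ε k ∧ ε k ≤ 1)
    (α : ℝ → ℕ → Fin 3) (hα : ∀ x ∈ Set.Icc (0 : ℝ) 1, Xval q (α x) = x)
    (m : ℕ) (c : ℕ → Fin 3) :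
    let f : ℝ → ℝ := fun x => F ε (α x)
    let x0 : ℝ := Xval q (fun k => if k < m then c k else 0)
    let x2 : ℝ := Xval q (fun k => if k < m then c k else 2)
    let μ : ℝ := ∏ j ∈ Finset.range m, gq ε (c j) j
    (0 < μ → IsGreatest (f '' Set.Icc x0 x2) (f x2) ∧
             IsLeast (f '' Set.Icc x0 x2) (f x0)) ∧
    (μ < 0 → IsGreatest (f '' Set.Icc x0 x2) (f x0) ∧
             IsLeast (f '' Set.Icc x0 x2) (f x2)) := by
  intro f x0 x2 μ
  have hQ : Qok q := ⟨hq, hsum⟩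
  have hE : Eok ε := hε
  set β0 : ℕ → Fin 3 := fun k => if k < m then c k else 0 with hb0def
  set β2 : ℕ → Fin 3 := fun k => if k < m then c k else 2 with hb2def
  have hβ0c : ∀ j, j < m → β0 j = c j := fun j hj => if_pos hj
  have hβ2c : ∀ j, j < m → β2 j = c j := fun j hj => if_pos hj
  -- congruence helpers
  have hXsum : ∀ β γ : ℕ → Fin 3, (∀ j, j < m → β j = γ j) →
      (∑ k ∈ Finset.range m, Xterm q β k) = ∑ k ∈ Finset.range m, Xterm q γ k := by
    intro β γ hag
    refine Finset.sum_congr rfl (fun i hi => ?_)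
    unfold Xterm
    rw [hag i (Finset.mem_range.mp hi)]
    congr 1
    exact Finset.prod_congr rfl (fun j hj => by
      rw [hag j (lt_trans (Finset.mem_range.mp hj) (Finset.mem_range.mp hi))])
  have hFsum : ∀ β γ : ℕ → Fin 3, (∀ j, j < m → β j = γ j) →
      (∑ k ∈ Finset.range m, Fterm ε β k) = ∑ k ∈ Finset.range m, Fterm ε γ k := by
    intro β γ hag
    refine Finset.sum_congr rfl (fun i hi => ?_)
    unfold Fterm
    rw [hag i (Finset.mem_range.mp hi)]
    congr 1
    exact Finset.prod_congr rfl (fun j hj => by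
      rw [hag j (lt_trans (Finset.mem_range.mp hj) (Finset.mem_range.mp hi))])
  -- the base sum and product
  have hx0 : x0 = ∑ k ∈ Finset.range m, Xterm q β0 k := by
    have hd0 := Xval_decomp hQ β0 m
    rw [Xval_const_eq_zero (fun k => if_neg (by omega : ¬ (k + m < m))), mul_zero,
      add_zero] at hd0
    exact hd0
  have hT2 : Xval (fun i k => q i (k + m)) (fun _ => (2 : Fin 3)) = 1 := by
    have hall2 : Xval q (fun _ => (2 : Fin 3)) = 1 := by
      have h1 := hα 1 ⟨by norm_num, le_refl 1⟩
      have hdig : ∀ j, α 1 j = 2 := Xval_eq_one_digits hQ h1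
      have heqf : (fun _ => (2 : Fin 3)) = α 1 := funext fun j => (hdig j).symm
      rw [heqf, h1]
    have hd := Xval_decomp hQ (fun _ => (2 : Fin 3)) m
    rw [hall2, Xval_two_partial hQ m] at hd
    have hP2 : 0 < ∏ j ∈ Finset.range m, q 2 j := Finset.prod_pos (fun j _ => hq 2 j)
    have hP2' : (∏ j ∈ Finset.range m, q ((fun _ => (2:Fin 3)) j) j) = ∏ j ∈ Finset.range m, q 2 j :=
      rfl
    rw [hP2'] at hd
    have hmm : (∏ j ∈ Finset.range m, q 2 j) * Xval (fun i k => q i (k + m)) (fun k => (2:Fin 3))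
        = (∏ j ∈ Finset.range m, q 2 j) * 1 := by linarith
    exact mul_left_cancel₀ (ne_of_gt hP2) hmm
  have hPpos : 0 < ∏ j ∈ Finset.range m, q (β0 j) j := qprod_pos hQ β0 m
  have hx2 : x2 = (∑ k ∈ Finset.range m, Xterm q β0 k) + ∏ j ∈ Finset.range m, q (β0 j) j := by
    have hd := Xval_decomp hQ β2 m
    have htl : Xval (fun i k => q i (k + m)) (fun k => β2 (k + m))
        = Xval (fun i k => q i (k + m)) (fun _ => (2 : Fin 3)) := by
      congr 1
      funext k
      exact if_neg (by omega : ¬ (k + m < m))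
    rw [htl, hT2, mul_one, hXsum β2 β0 (fun j hj => by rw [hβ2c j hj, hβ0c j hj]),
      show (∏ j ∈ Finset.range m, q (β2 j) j) = ∏ j ∈ Finset.range m, q (β0 j) j from
        Finset.prod_congr rfl (fun j hj => by
          rw [hβ2c j (Finset.mem_range.mp hj), hβ0c j (Finset.mem_range.mp hj)])] at hd
    exact hd
  have hx02 : x0 ≤ x2 := by rw [hx0, hx2]; linarith
  have h0le : (0:ℝ) ≤ x0 := Xval_nonneg hQ β0
  have h2le1 : x2 ≤ 1 := Xval_le_one hQ β2
  -- F-values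
  have hμeq : (∏ j ∈ Finset.range m, gq ε (β0 j) j) = μ :=
    Finset.prod_congr rfl (fun j hj => by rw [hβ0c j (Finset.mem_range.mp hj)])
  have hFβ0 : F ε β0 = ∑ k ∈ Finset.range m, Fterm ε β0 k := by
    have hd := F_decomp hE β0 m
    rw [F_const_eq_zero (fun k => if_neg (by omega : ¬ (k + m < m))), mul_zero, add_zero] at hd
    exact hd
  have hFβ2 : F ε β2 = (∑ k ∈ Finset.range m, Fterm ε β0 k) + μ := by
    have hd := F_decomp hE β2 m
    have htl : F (fun k => ε (k + m)) (fun k => β2 (k + m))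
        = F (fun k => ε (k + m)) (fun _ => (2 : Fin 3)) := by
      congr 1
      funext k
      exact if_neg (by omega : ¬ (k + m < m))
    rw [htl, F_two (hE.shift m), mul_one, hFsum β2 β0 (fun j hj => by rw [hβ2c j hj, hβ0c j hj]),
      show (∏ j ∈ Finset.range m, gq ε (β2 j) j) = μ from by
        rw [← hμeq]
        exact Finset.prod_congr rfl (fun j hj => by
          rw [hβ2c j (Finset.mem_range.mp hj), hβ0c j (Finset.mem_range.mp hj)])] at hd
    exact hd
  have hfx0 : f x0 = ∑ k ∈ Finset.range m, Fterm ε β0 k := by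
    have hXx : Xval q (α x0) = x0 := hα x0 ⟨h0le, le_trans hx02 h2le1⟩
    have hc : F ε (α x0) = F ε β0 := F_congr hQ hE (α x0) β0 hXx
    rw [show f x0 = F ε (α x0) from rfl, hc, hFβ0]
  have hfx2 : f x2 = (∑ k ∈ Finset.range m, Fterm ε β0 k) + μ := by
    have hXx : Xval q (α x2) = x2 := hα x2 ⟨le_trans h0le hx02, h2le1⟩
    have hc : F ε (α x2) = F ε β2 := F_congr hQ hE (α x2) β2 hXx
    rw [show f x2 = F ε (α x2) from rfl, hc, hFβ2]
  -- key estimate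
  have hkey : ∀ x, x ∈ Set.Icc x0 x2 → ∃ T, 0 ≤ T ∧ T ≤ 1 ∧
      f x = (∑ k ∈ Finset.range m, Fterm ε β0 k) + μ * T := by
    intro x hx
    have hXx : Xval q (α x) = x := hα x ⟨le_trans h0le hx.1, le_trans hx.2 h2le1⟩
    by_cases hpre : ∀ j, j < m → α x j = c j
    · refine ⟨F (fun k => ε (k + m)) (fun k => α x (k + m)),
        F_nonneg (hE.shift m) _, F_le_one (hE.shift m) _, ?_⟩
      have hd := F_decomp hE (α x) m
      rw [show f x = F ε (α x) from rfl, hd,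
        hFsum (α x) β0 (fun j hj => by rw [hpre j hj, hβ0c j hj])]
      congr 2
      rw [← hμeq]
      exact Finset.prod_congr rfl (fun j hj => by
        rw [hpre j (Finset.mem_range.mp hj), hβ0c j (Finset.mem_range.mp hj)])
    · push_neg at hpre
      obtain ⟨j0, hj0m, hj0⟩ := hpre
      have hex : ∃ j, j < m ∧ α x j ≠ c j := ⟨j0, hj0m, hj0⟩
      have hkm : Nat.find hex < m := (Nat.find_spec hex).1
      have hkne : α x (Nat.find hex) ≠ c (Nat.find hex) := (Nat.find_spec hex).2
      have hagree : ∀ j, j < Nat.find hex → α x j = c j := by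
        intro j hj
        by_contra hne
        exact (Nat.find_min hex hj) ⟨lt_trans hj hkm, hne⟩
      rcases lt_trichotomy (α x (Nat.find hex)).val ((c (Nat.find hex))).val with hlt | heqv | hgt
      · -- x = x0
        have hlt' : (α x (Nat.find hex)).val < (β0 (Nat.find hex)).val := by
          rw [hβ0c _ hkm]; exact hlt
        have hmono := (Xval_mono hQ (α x) β0 (Nat.find hex)
          (fun j hj => by rw [hagree j hj, hβ0c j (lt_trans hj hkm)]) hlt').1
        have hxeq : x = x0 := le_antisymm (by rw [← hXx]; exact hmono) hx.1
        refine ⟨0, le_refl 0, zero_le_one, ?_⟩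
        rw [hxeq, hfx0]
        ring
      · exact absurd (Fin.val_injective heqv) hkne
      · -- x = x2
        have hlt' : (β2 (Nat.find hex)).val < (α x (Nat.find hex)).val := by
          rw [hβ2c _ hkm]; exact hgt
        have hmono := (Xval_mono hQ β2 (α x) (Nat.find hex)
          (fun j hj => by rw [hagree j hj, hβ2c j (lt_trans hj hkm)]) hlt').1
        have hxeq : x = x2 := le_antisymm hx.2 (by rw [← hXx]; exact hmono)
        refine ⟨1, zero_le_one, le_refl 1, ?_⟩
        rw [hxeq, hfx2]
        ring
  have hmem0 : x0 ∈ Set.Icc x0 x2 := ⟨le_refl _, hx02⟩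
  have hmem2 : x2 ∈ Set.Icc x0 x2 := ⟨hx02, le_refl _⟩
  constructor
  · intro hμ
    refine ⟨⟨⟨x2, hmem2, rfl⟩, ?_⟩, ⟨x0, hmem0, rfl⟩, ?_⟩
    · rintro y ⟨x, hx, rfl⟩
      obtain ⟨T, hT0, hT1, hfx⟩ := hkey x hx
      rw [hfx, hfx2]
      nlinarith
    · rintro y ⟨x, hx, rfl⟩
      obtain ⟨T, hT0, hT1, hfx⟩ := hkey x hx
      rw [hfx, hfx0]
      nlinarith
  · intro hμ
    refine ⟨⟨⟨x0, hmem0, rfl⟩, ?_⟩, ⟨x2, hmem2, rfl⟩, ?_⟩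
    · rintro y ⟨x, hx, rfl⟩
      obtain ⟨T, hT0, hT1, hfx⟩ := hkey x hx
      rw [hfx, hfx0]
      nlinarith
    · rintro y ⟨x, hx, rfl⟩
      obtain ⟨T, hT0, hT1, hfx⟩ := hkey x hx
      rw [hfx, hfx2]
      nlinarith
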